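/- Every quotient Higgs bundle of an H-nef Higgs bundle is H-nef. -/
import Mathlib


/-- An abstract theory of Higgs bundles (on the varieties in play, together with all
the Higgs Grassmannians), as needed to formulate the recursive notions of
Higgs-ampleness and Higgs-numerical effectiveness of Bruzzo–Graña Otero. -/
structure HiggsTheory where
  /-- Higgs bundles -/
  HB : Type
  /-- rank of the underlying vector bundle -/
  rank : HB → ℕ
  rank_pos : ∀ E, 0 < rank E
  /-- dual Higgs bundle -/
  dual : HB → HB
  /-- the determinant line bundle det E is ample -/
  detAmple : HB → Prop
  /-- the determinant line bundle det E is nef -/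
  detNef : HB → Prop
  /-- for rank-one Higgs bundles: the underlying line bundle is ample -/
  lineAmple : HB → Prop
  /-- for rank-one Higgs bundles: the underlying line bundle is nef -/
  lineNef : HB → Prop
  /-- `UnivQuot E Q`: `Q` is a universal Higgs quotient bundle `Q_{s,E}` of `E` on one of
  the Higgs Grassmannians `HGr_s(E)`, `0 < s < rank E` -/
  UnivQuot : HB → HB → Prop
  quot_rank_lt : ∀ E Q, UnivQuot E Q → rank Q < rank E

/-- Higgs-ampleness, defined recursively on the rank. -/
def HiggsTheory.HAmple (T : HiggsTheory) (E : T.HB) : Prop :=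
  if T.rank E = 1 then T.lineAmple E
  else T.detAmple E ∧ ∀ Q, T.UnivQuot E Q → T.HAmple Q
termination_by T.rank E
decreasing_by exact T.quot_rank_lt _ _ ‹_›

/-- Higgs-numerical effectiveness (H-nefness), defined recursively on the rank. -/
def HiggsTheory.HNef (T : HiggsTheory) (E : T.HB) : Prop :=
  if T.rank E = 1 then T.lineNef E
  else T.detNef E ∧ ∀ Q, T.UnivQuot E Q → T.HNef Q
termination_by T.rank E
decreasing_by exact T.quot_rank_lt _ _ ‹_›

/-- Higgs-numerical flatness: both `E` and its dual are H-nef. -/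
def HiggsTheory.HNflat (T : HiggsTheory) (E : T.HB) : Prop :=
  T.HNef E ∧ T.HNef (T.dual E)

/-- Every quotient Higgs bundle of an H-nef Higgs bundle is H-nef.
`HiggsQuotientOf F E` means `F` is a (locally free) quotient Higgs bundle of `E`, i.e. a
locally free quotient of `E` with φ-invariant kernel; `PullbackOf F Q` means `F` is the
pullback of `Q` along some morphism.  Context facts: by the universal property of the
Higgs Grassmannian, a proper rank-s Higgs quotient corresponds to a section
`σ : X → HGr_s(𝔈)` with `F ≅ σ*(Q_{s,𝔈})` (`hsec`), and H-nefness is preserved under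
pullback along any morphism (`hpull`). -/
theorem quotient_of_hnef_is_hnef (T : HiggsTheory)
    (HiggsQuotientOf : T.HB → T.HB → Prop)
    (PullbackOf : T.HB → T.HB → Prop)
    (hsec : ∀ E F, HiggsQuotientOf F E →
      (∃ Q, T.UnivQuot E Q ∧ PullbackOf F Q) ∨ F = E)
    (hpull : ∀ Q F, PullbackOf F Q → T.HNef Q → T.HNef F)
    (E F : T.HB) (hE : T.HNef E) (hF : HiggsQuotientOf F E) :
    T.HNef F := by
  rcases hsec E F hF with ⟨Q, hQ, hP⟩ | rfl
  · apply hpull Q F hP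
    rw [HiggsTheory.HNef] at hE
    split at hE
    · have h1 := T.quot_rank_lt E Q hQ; have h2 := T.rank_pos Q; omega
    · exact hE.2 Q hQ
  · exact hE
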